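/- Let p be a real polynomial of degree k ≥ 2 and let α ≠ β be simple real roots of p. Let m ∈ ℝ satisfy p'(α) − p'(β)·m ≠ 0. Then along the line through the focal point (α, β) of slope m, the second component of the secant map has a finite limit: as t → 0 with t ≠ 0, ( (β + m t)·q(α + t, β + m t) − p(β + m t) ) / q(α + t, β + m t) converges to y(m) = (β·p'(α) − α·p'(β)·m)/(p'(α) − p'(β)·m). -/

import Mathlib

open Polynomial Filter Topology

/-- The symmetric polynomial `q(x,y) = Σ_{j=1}^k a_j Σ_{i=0}^{j-1} x^i y^{j-1-i}`
associated to a real polynomial `p(x) = Σ_{j=0}^k a_j x^j`;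
it satisfies `p(x) - p(y) = (x - y) * secQ p x y`. -/
noncomputable def secQ (p : Polynomial ℝ) (x y : ℝ) : ℝ :=
  ∑ j ∈ Finset.range (p.natDegree + 1),
    p.coeff j * ∑ i ∈ Finset.range j, x ^ i * y ^ (j - 1 - i)

lemma secQ_key (p : Polynomial ℝ) (x y : ℝ) :
    (x - y) * secQ p x y = p.eval x - p.eval y := by
  unfold secQ
  rw [p.eval_eq_sum_range, p.eval_eq_sum_range, ← Finset.sum_sub_distrib, Finset.mul_sum]
  refine Finset.sum_congr rfl fun j _ => ?_
  rw [← mul_sub, mul_comm (x - y), mul_assoc, geom_sum₂_mul]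

lemma slope_lim (f : ℝ → ℝ) (c : ℝ) (h : HasDerivAt f c 0) :
    Tendsto (fun t => (f t - f 0) / t) (𝓝[≠] 0) (𝓝 c) := by
  have := hasDerivAt_iff_tendsto_slope.mp h
  simpa [slope_fun_def, div_eq_inv_mul] using this

theorem secant_focal_slope_limit (p : Polynomial ℝ) (hp : 2 ≤ p.natDegree) (α β m : ℝ)
    (hαβ : α ≠ β) (hα : p.eval α = 0) (hβ : p.eval β = 0)
    (hα' : p.derivative.eval α ≠ 0) (hβ' : p.derivative.eval β ≠ 0)
    (hm : p.derivative.eval α - p.derivative.eval β * m ≠ 0) :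
    Tendsto (fun t =>
        ((β + m * t) * secQ p (α + t) (β + m * t) - p.eval (β + m * t)) /
          secQ p (α + t) (β + m * t))
      (𝓝[≠] 0)
      (𝓝 ((β * p.derivative.eval α - α * p.derivative.eval β * m) /
        (p.derivative.eval α - p.derivative.eval β * m))) := by
  set A := p.derivative.eval α with hA
  set B := p.derivative.eval β with hB
  have hfα : Tendsto (fun t => p.eval (α + t) / t) (𝓝[≠] 0) (𝓝 A) := by
    have h1 : HasDerivAt (fun t : ℝ => p.eval (α + t)) A 0 := by
      have h0 : HasDerivAt (fun t : ℝ => α + t) 1 0 := by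
        simpa using (hasDerivAt_id (0:ℝ)).const_add α
      have := (p.hasDerivAt (α + 0)).comp 0 h0
      simp only [add_zero, mul_one, mul_zero] at this
      exact this
    have := slope_lim _ _ h1
    simpa [hα] using this
  have hfβ : Tendsto (fun t => p.eval (β + m * t) / t) (𝓝[≠] 0) (𝓝 (B * m)) := by
    have h1 : HasDerivAt (fun t : ℝ => p.eval (β + m * t)) (B * m) 0 := by
      have h0 : HasDerivAt (fun t : ℝ => β + m * t) m 0 := by
        simpa using ((hasDerivAt_id (0:ℝ)).const_mul m).const_add β
      have := (p.hasDerivAt (β + m * 0)).comp 0 h0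
      simp only [add_zero, mul_one, mul_zero] at this
      exact this
    have := slope_lim _ _ h1
    simpa [hβ] using this
  have hcβ : Tendsto (fun t : ℝ => β + m * t) (𝓝[≠] 0) (𝓝 β) := by
    have : Continuous (fun t : ℝ => β + m * t) := by continuity
    simpa using (this.tendsto 0).mono_left nhdsWithin_le_nhds
  have hcα : Tendsto (fun t : ℝ => α + t) (𝓝[≠] 0) (𝓝 α) := by
    have : Continuous (fun t : ℝ => α + t) := by continuity
    simpa using (this.tendsto 0).mono_left nhdsWithin_le_nhds
  have hN : Tendsto (fun t =>
      ((β + m * t) * p.eval (α + t) - (α + t) * p.eval (β + m * t)) / t)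
      (𝓝[≠] 0) (𝓝 (β * A - α * B * m)) := by
    have h := (hcβ.mul hfα).sub (hcα.mul hfβ)
    rw [show β * A - α * B * m = β * A - α * (B * m) by ring]
    exact h.congr fun t => by simp [sub_div, mul_div_assoc]
  have hD : Tendsto (fun t => (p.eval (α + t) - p.eval (β + m * t)) / t)
      (𝓝[≠] 0) (𝓝 (A - B * m)) := by
    exact (hfα.sub hfβ).congr fun t => by rw [sub_div]
  have hdiv := hN.div hD hm
  refine hdiv.congr' ?_
  have hopen : ∀ᶠ t in 𝓝[≠] (0:ℝ), (α + t) - (β + m * t) ≠ 0 := by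
    have hc : Tendsto (fun t : ℝ => (α + t) - (β + m * t)) (𝓝[≠] 0) (𝓝 (α - β)) := by
      simpa using hcα.sub hcβ
    exact hc (isOpen_ne.mem_nhds (sub_ne_zero.mpr hαβ))
  filter_upwards [hopen, self_mem_nhdsWithin] with t hd (ht : t ≠ 0)
  set x := α + t
  set y := β + m * t
  set q := secQ p x y with hq
  have hkey : (x - y) * q = p.eval x - p.eval y := secQ_key p x y
  have e1 : (y * p.eval x - x * p.eval y) / t / ((p.eval x - p.eval y) / t)
      = (y * p.eval x - x * p.eval y) / (p.eval x - p.eval y) := by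
    rcases eq_or_ne (p.eval x - p.eval y) 0 with h0 | h0
    · simp [h0]
    · field_simp
  show (y * p.eval x - x * p.eval y) / t / ((p.eval x - p.eval y) / t)
      = (y * q - p.eval y) / q
  rw [e1, ← hkey, show y * p.eval x - x * p.eval y = (x - y) * (y * q - p.eval y) by
      rw [show (x - y) * (y * q - p.eval y) = y * ((x - y) * q) - (x - y) * p.eval y by ring,
        hkey]; ring, mul_div_mul_left _ _ hd]
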